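/- Equilibrium uniqueness: given agents (v_i, B_i, Γ_i) and exchange constraints (I_i = [−l_i, r_i], λ_i) with buyer set 𝓑 = {i : v_i ≥ λ_i} and seller set 𝓢 = {i : v_i < λ_i}, if Σ_{i∈𝓑} min{r_i, B_i/λ_i} = Σ_{j∈𝓢} min{l_j, Γ_j}, then there is a unique reachable market state, given by x_i = min{r_i, B_i/λ_i} for each buyer i and x_j = −min{l_j, Γ_j} for each seller j, and its market liquid welfare equals Σ_{i∈𝓑}(v_i·Γ_i + min{v_i·r_i, B_i}) + Σ_{j∈𝓢} v_j·max{0, Γ_j − l_j}. -/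

import Mathlib

open Finset

lemma min_mul_key (lam r B : ℝ) (hlam : 0 < lam) :
    min (lam * r) B = lam * min r (B / lam) := by
  rcases le_total r (B / lam) with h | h
  · rw [min_eq_left h, min_eq_left]
    calc lam * r = r * lam := mul_comm _ _
    _ ≤ B := (le_div_iff₀ hlam).mp h
  · rw [min_eq_right h, mul_div_cancel₀ _ hlam.ne', min_eq_right]
    calc B = (B / lam) * lam := (div_mul_cancel₀ _ hlam.ne').symm
    _ ≤ r * lam := by nlinarith
    _ = lam * r := mul_comm _ _

lemma split_key (n : ℕ) (v lam : ℕ → ℝ) (f : ℕ → ℝ) :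
    ∑ i ∈ Icc 1 n, f i =
      ∑ i ∈ (Icc 1 n).filter (fun i => lam i ≤ v i), f i +
      ∑ i ∈ (Icc 1 n).filter (fun i => v i < lam i), f i := by
  rw [← Finset.sum_filter_add_sum_filter_not (Icc 1 n) (fun i => lam i ≤ v i) f]
  congr 1
  apply Finset.sum_congr _ (fun _ _ => rfl)
  apply Finset.filter_congr
  intro i _
  simp [not_le]

/-- A market state `(x, p)` is reachable under exchange constraints
`(I_i = [−l_i, r_i], λ_i)`: self-consistent, feasible (within intervals,
endowments and budgets, with `p_i = λ_i x_i`), and in equilibrium (either every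
buyer buys maximally within budget and interval, or every seller sells
maximally). -/
def Reachable (n : ℕ) (v B Γ l r lam : ℕ → ℝ) (x p : ℕ → ℝ) : Prop :=
  (∑ i ∈ Icc 1 n, x i = 0) ∧
  (∀ i ∈ Icc 1 n, -(l i) ≤ x i ∧ x i ≤ r i ∧ -Γ i ≤ x i ∧
    p i = lam i * x i ∧ p i ≤ B i) ∧
  ((∀ i ∈ Icc 1 n, lam i ≤ v i → p i = min (lam i * r i) (B i)) ∨
   (∀ j ∈ Icc 1 n, v j < lam j → x j = -(min (l j) (Γ j))))

/-- Equilibrium-Unique Property: if demand balances supply,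
`∑_{i∈𝓑} min{r_i, B_i/λ_i} = ∑_{j∈𝓢} min{l_j, Γ_j}`, then the reachable state is
unique, given by `x_i = min{r_i, B_i/λ_i}` for buyers and `x_j = −min{l_j, Γ_j}`
for sellers, and its market liquid welfare equals
`∑_{𝓑}(v_iΓ_i + min{v_i r_i, B_i}) + ∑_{𝓢} v_j·max{0, Γ_j − l_j}`. -/
theorem stmt_16 (n : ℕ) (v B Γ l r lam : ℕ → ℝ)
    (hv : ∀ i ∈ Icc 1 n, 0 ≤ v i)
    (hB : ∀ i ∈ Icc 1 n, 0 ≤ B i) (hΓ : ∀ i ∈ Icc 1 n, 0 ≤ Γ i)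
    (hl : ∀ i ∈ Icc 1 n, 0 ≤ l i) (hr : ∀ i ∈ Icc 1 n, 0 ≤ r i)
    (hlam : ∀ i ∈ Icc 1 n, 0 < lam i)
    (hbal : ∑ i ∈ (Icc 1 n).filter (fun i => lam i ≤ v i), min (r i) (B i / lam i)
      = ∑ j ∈ (Icc 1 n).filter (fun j => v j < lam j), min (l j) (Γ j))
    (xs ps : ℕ → ℝ)
    (hxs : ∀ i ∈ Icc 1 n, xs i =
      if lam i ≤ v i then min (r i) (B i / lam i) else -(min (l i) (Γ i)))
    (hps : ∀ i ∈ Icc 1 n, ps i = lam i * xs i) :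
    Reachable n v B Γ l r lam xs ps ∧
    (∀ x p : ℕ → ℝ, Reachable n v B Γ l r lam x p → ∀ i ∈ Icc 1 n, x i = xs i) ∧
    ∑ i ∈ Icc 1 n, (v i * Γ i + min (v i * xs i) (B i)) =
      ∑ i ∈ (Icc 1 n).filter (fun i => lam i ≤ v i),
        (v i * Γ i + min (v i * r i) (B i))
      + ∑ j ∈ (Icc 1 n).filter (fun j => v j < lam j),
        v j * max 0 (Γ j - l j) := by
  have hxsum : ∑ i ∈ Icc 1 n, xs i = 0 := by
    rw [split_key n v lam]
    have h1 : ∑ i ∈ (Icc 1 n).filter (fun i => lam i ≤ v i), xs i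
        = ∑ i ∈ (Icc 1 n).filter (fun i => lam i ≤ v i), min (r i) (B i / lam i) := by
      apply Finset.sum_congr rfl
      intro i hi
      rw [Finset.mem_filter] at hi
      rw [hxs i hi.1, if_pos hi.2]
    have h2 : ∑ i ∈ (Icc 1 n).filter (fun i => v i < lam i), xs i
        = ∑ i ∈ (Icc 1 n).filter (fun i => v i < lam i), (-(min (l i) (Γ i))) := by
      apply Finset.sum_congr rfl
      intro i hi
      rw [Finset.mem_filter] at hi
      rw [hxs i hi.1, if_neg (not_le.mpr hi.2)]
    rw [h1, h2, Finset.sum_neg_distrib, hbal]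
    ring
  refine ⟨⟨hxsum, ?_, Or.inl ?_⟩, ?_, ?_⟩
  · -- feasibility
    intro i hi
    have hli := hl i hi; have hri := hr i hi; have hΓi := hΓ i hi
    have hBi := hB i hi; have hlami := hlam i hi
    rw [hxs i hi, hps i hi, hxs i hi]
    by_cases hbuy : lam i ≤ v i
    · rw [if_pos hbuy]
      have h0 : (0:ℝ) ≤ min (r i) (B i / lam i) :=
        le_min hri (div_nonneg hBi hlami.le)
      refine ⟨by linarith, min_le_left _ _, by linarith, rfl, ?_⟩
      calc lam i * min (r i) (B i / lam i) ≤ lam i * (B i / lam i) := by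
            apply mul_le_mul_of_nonneg_left (min_le_right _ _) hlami.le
      _ = B i := mul_div_cancel₀ _ hlami.ne'
    · rw [if_neg hbuy]
      have h1 : -(min (l i) (Γ i)) ≤ 0 := by
        have : (0:ℝ) ≤ min (l i) (Γ i) := le_min hli hΓi
        linarith
      refine ⟨?_, by linarith, ?_, rfl, ?_⟩
      · simp only [neg_le_neg_iff]
        exact min_le_left _ _
      · simp only [neg_le_neg_iff]
        exact min_le_right _ _
      · calc lam i * -(min (l i) (Γ i)) ≤ lam i * 0 :=
            mul_le_mul_of_nonneg_left h1 hlami.le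
        _ = 0 := mul_zero _
        _ ≤ B i := hBi
  · -- equilibrium: buyers buy maximally
    intro i hi hbuy
    rw [hps i hi, hxs i hi, if_pos hbuy, min_mul_key _ _ _ (hlam i hi)]
  · -- uniqueness
    intro x p hxp i hi
    obtain ⟨hsum, hfeas, heq⟩ := hxp
    -- pointwise bounds
    have hbuy_le : ∀ i ∈ (Icc 1 n).filter (fun i => lam i ≤ v i),
        x i ≤ min (r i) (B i / lam i) := by
      intro i hi
      rw [Finset.mem_filter] at hi
      obtain ⟨_, h2, _, h4, h5⟩ := hfeas i hi.1
      refine le_min h2 ?_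
      rw [le_div_iff₀ (hlam i hi.1), mul_comm]
      rw [h4] at h5; exact h5
    have hsell_ge : ∀ j ∈ (Icc 1 n).filter (fun j => v j < lam j),
        -(min (l j) (Γ j)) ≤ x j := by
      intro j hj
      rw [Finset.mem_filter] at hj
      obtain ⟨h1, _, h3, _, _⟩ := hfeas j hj.1
      rw [neg_le]
      exact le_min (by linarith) (by linarith)
    have hsplit := split_key n v lam x
    rw [hsum] at hsplit
    rcases heq with hbuyers | hsellers
    · -- every buyer buys maximally ⇒ buyer x's determined, sellers by sum
      have hbx : ∀ i ∈ (Icc 1 n).filter (fun i => lam i ≤ v i),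
          x i = min (r i) (B i / lam i) := by
        intro i hi
        rw [Finset.mem_filter] at hi
        obtain ⟨_, _, _, h4, _⟩ := hfeas i hi.1
        have := hbuyers i hi.1 hi.2
        rw [h4, min_mul_key _ _ _ (hlam i hi.1)] at this
        exact mul_left_cancel₀ (hlam i hi.1).ne' this
      have hsumsell : ∑ j ∈ (Icc 1 n).filter (fun j => v j < lam j),
          (-(min (l j) (Γ j))) = ∑ j ∈ (Icc 1 n).filter (fun j => v j < lam j), x j := by
        have hb : ∑ i ∈ (Icc 1 n).filter (fun i => lam i ≤ v i), x i
            = ∑ i ∈ (Icc 1 n).filter (fun i => lam i ≤ v i), min (r i) (B i / lam i) :=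
          Finset.sum_congr rfl hbx
        rw [hb, hbal] at hsplit
        rw [Finset.sum_neg_distrib]
        linarith
      have hsx := (Finset.sum_eq_sum_iff_of_le hsell_ge).mp hsumsell
      rw [hxs i hi]
      by_cases hb : lam i ≤ v i
      · rw [if_pos hb]
        exact hbx i (Finset.mem_filter.mpr ⟨hi, hb⟩)
      · rw [if_neg hb]
        exact (hsx i (Finset.mem_filter.mpr ⟨hi, not_le.mp hb⟩)).symm
    · -- every seller sells maximally ⇒ seller x's determined, buyers by sum
      have hsx : ∀ j ∈ (Icc 1 n).filter (fun j => v j < lam j),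
          x j = -(min (l j) (Γ j)) := by
        intro j hj
        rw [Finset.mem_filter] at hj
        exact hsellers j hj.1 hj.2
      have hsumbuy : ∑ i ∈ (Icc 1 n).filter (fun i => lam i ≤ v i), x i
          = ∑ i ∈ (Icc 1 n).filter (fun i => lam i ≤ v i), min (r i) (B i / lam i) := by
        have hsf : ∑ j ∈ (Icc 1 n).filter (fun j => v j < lam j), x j
            = ∑ j ∈ (Icc 1 n).filter (fun j => v j < lam j), (-(min (l j) (Γ j))) :=
          Finset.sum_congr rfl hsx
        rw [hsf, Finset.sum_neg_distrib] at hsplit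
        rw [hbal]
        linarith
      have hbx := (Finset.sum_eq_sum_iff_of_le hbuy_le).mp hsumbuy
      rw [hxs i hi]
      by_cases hb : lam i ≤ v i
      · rw [if_pos hb]
        exact hbx i (Finset.mem_filter.mpr ⟨hi, hb⟩)
      · rw [if_neg hb]
        exact hsx i (Finset.mem_filter.mpr ⟨hi, not_le.mp hb⟩)
  · -- welfare
    rw [split_key n v lam]
    congr 1
    · apply Finset.sum_congr rfl
      intro i hi
      rw [Finset.mem_filter] at hi
      have hlami := hlam i hi.1
      have hBi := hB i hi.1
      rw [hxs i hi.1, if_pos hi.2]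
      congr 1
      rcases le_total (r i) (B i / lam i) with h | h
      · rw [min_eq_left h]
      · rw [min_eq_right h]
        have h1 : B i ≤ v i * (B i / lam i) := by
          calc B i = lam i * (B i / lam i) := (mul_div_cancel₀ _ hlami.ne').symm
          _ ≤ v i * (B i / lam i) :=
            mul_le_mul_of_nonneg_right hi.2 (div_nonneg hBi hlami.le)
        have h2 : v i * (B i / lam i) ≤ v i * r i :=
          mul_le_mul_of_nonneg_left h (by linarith [hv i hi.1])
        rw [min_eq_right h1, min_eq_right (by linarith)]
    · apply Finset.sum_congr rfl
      intro j hj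
      rw [Finset.mem_filter] at hj
      have hvj := hv j hj.1; have hBj := hB j hj.1
      have hlj := hl j hj.1; have hΓj := hΓ j hj.1
      rw [hxs j hj.1, if_neg (not_le.mpr hj.2)]
      rcases le_total (Γ j) (l j) with h | h
      · rw [min_eq_right h, max_eq_left (by linarith)]
        have : min (v j * -Γ j) (B j) = v j * -Γ j :=
          min_eq_left (by nlinarith)
        rw [this]; ring
      · rw [min_eq_left h, max_eq_right (by linarith)]
        have : min (v j * -(l j)) (B j) = v j * -(l j) :=
          min_eq_left (by nlinarith)
        rw [this]; ring
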